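/- Let A be a C*-algebra and E ⊆ A a commutative C*-subalgebra containing an approximate unit for A. Then E_* ⊆ closure(E_{sa•}) (closure in the norm topology). If moreover E is maximal commutative, i.e. every element of A commuting with all elements of E lies in E, then E_* = closure(E_{sa•}). -/

import Mathlib

open Filter Topology Polynomial

section AuxCStar

variable {A : Type*} [CStarAlgebra A]

lemma aux_mul_aeval_mem (E : Set A)
    (hadd : ∀ x ∈ E, ∀ y ∈ E, x + y ∈ E)
    (hmul : ∀ x ∈ E, ∀ y ∈ E, x * y ∈ E)
    (hsmulR : ∀ (r : ℝ), ∀ x ∈ E, r • x ∈ E)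
    {x : A} (hx : x ∈ E) (p : ℝ[X]) : x * aeval x p ∈ E := by
  induction p using Polynomial.induction_on with
  | C r =>
      simpa [Algebra.algebraMap_eq_smul_one, mul_smul_comm] using hsmulR r x hx
  | add p q hp hq =>
      rw [map_add, mul_add]; exact hadd _ hp _ hq
  | monomial n r hp =>
      have h : x * (aeval x) (C r * X ^ (n+1)) = (x * (aeval x) (C r * X ^ n)) * x := by
        simp [pow_succ, mul_assoc]
      rw [h]; exact hmul _ hp _ hx

lemma aux_spec_subset {x : A} [Nontrivial A] :
    spectrum ℝ x ⊆ Set.Icc (-‖x‖) ‖x‖ := by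
  intro t ht
  have := spectrum.norm_le_norm_of_mem ht
  rw [Real.norm_eq_abs] at this
  exact abs_le.mp this

lemma aux_cfc_mem (E : Set A) (hclosed : IsClosed E)
    (hadd : ∀ x ∈ E, ∀ y ∈ E, x + y ∈ E)
    (hmul : ∀ x ∈ E, ∀ y ∈ E, x * y ∈ E)
    (hsmulR : ∀ (r : ℝ), ∀ x ∈ E, r • x ∈ E)
    {x : A} (hx : x ∈ E) (hxsa : IsSelfAdjoint x)
    (f : ℝ → ℝ) (hf : Continuous f) (hf0 : f 0 = 0) : cfc f x ∈ E := by
  rcases subsingleton_or_nontrivial A with h | h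
  · simpa [Subsingleton.elim (cfc f x) x] using hx
  have key : ∀ δ > 0, ∃ y ∈ E, ‖cfc f x - y‖ ≤ δ := by
    intro δ hδ
    obtain ⟨p, hp⟩ := exists_polynomial_near_of_continuousOn (-‖x‖) ‖x‖ f
      hf.continuousOn (δ/2) (by linarith)
    set p' : ℝ[X] := p - C (p.coeff 0) with hp'def
    have h0 : (0:ℝ) ∈ Set.Icc (-‖x‖) ‖x‖ := ⟨neg_nonpos.mpr (norm_nonneg x), norm_nonneg x⟩
    have hc0 : |p.coeff 0| < δ/2 := by
      have := hp 0 h0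
      simpa [hf0, ← Polynomial.coeff_zero_eq_eval_zero] using this
    have hp'bound : ∀ t ∈ spectrum ℝ x, ‖f t - p'.eval t‖ ≤ δ := by
      intro t ht
      have h1 := hp t (aux_spec_subset ht)
      rw [Real.norm_eq_abs]
      have : f t - p'.eval t = (f t - p.eval t) + p.coeff 0 := by
        simp [hp'def]; ring
      rw [this]
      calc |(f t - p.eval t) + p.coeff 0| ≤ |f t - p.eval t| + |p.coeff 0| := abs_add_le _ _
        _ ≤ δ := by rw [abs_sub_comm]; linarith
    have hcoeff0 : p'.coeff 0 = 0 := by simp [hp'def]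
    have hmem : aeval x p' ∈ E := by
      have heq : aeval x p' = x * aeval x p'.divX := by
        conv_lhs => rw [← Polynomial.X_mul_divX_add p']
        simp [hcoeff0]
      rw [heq]
      exact aux_mul_aeval_mem E hadd hmul hsmulR hx _
    refine ⟨aeval x p', hmem, ?_⟩
    rw [← cfc_polynomial p' x, ← cfc_sub f p'.eval x hf.continuousOn (by fun_prop)]
    exact norm_cfc_le hδ.le hp'bound
  have hcl : cfc f x ∈ closure E := by
    rw [Metric.mem_closure_iff]
    intro δ hδ
    obtain ⟨y, hy, hny⟩ := key (δ/2) (by linarith)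
    exact ⟨y, hy, by rw [dist_eq_norm]; linarith⟩
  rwa [hclosed.closure_eq] at hcl

lemma aux_intertwine (a : A) (f : ℝ → ℝ) (hf : Continuous f) :
    a * cfc f (star a * a) = cfc f (a * star a) * a := by
  rcases subsingleton_or_nontrivial A with h | h
  · exact Subsingleton.elim _ _
  set c := star a * a with hcdef
  set d := a * star a with hddef
  have hc : IsSelfAdjoint c := IsSelfAdjoint.star_mul_self a
  have hd : IsSelfAdjoint d := IsSelfAdjoint.mul_star_self a
  have hac : a * c = d * a := by rw [hcdef, hddef, ← mul_assoc]
  have hpoly : ∀ p : ℝ[X], a * aeval c p = aeval d p * a := by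
    intro p
    induction p using Polynomial.induction_on with
    | C r => simp [Algebra.algebraMap_eq_smul_one, mul_smul_comm, smul_mul_assoc]
    | add p q hp hq => simp only [map_add, mul_add, add_mul, hp, hq]
    | monomial n r hp =>
        calc a * aeval c (C r * X^(n+1)) = (a * aeval c (C r * X^n)) * c := by
              simp [pow_succ, mul_assoc]
          _ = aeval d (C r * X^n) * (a * c) := by rw [hp, mul_assoc]
          _ = aeval d (C r * X^(n+1)) * a := by
              rw [hac, ← mul_assoc]; simp [pow_succ, mul_assoc]
  set M := max ‖c‖ ‖d‖ with hMdef
  have hMc : spectrum ℝ c ⊆ Set.Icc (-M) M := by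
    exact subset_trans aux_spec_subset
      (Set.Icc_subset_Icc (neg_le_neg (le_max_left _ _)) (le_max_left _ _))
  have hMd : spectrum ℝ d ⊆ Set.Icc (-M) M := by
    exact subset_trans aux_spec_subset
      (Set.Icc_subset_Icc (neg_le_neg (le_max_right _ _)) (le_max_right _ _))
  have key : ∀ δ > 0, ‖a * cfc f c - cfc f d * a‖ ≤ 2 * ‖a‖ * δ := by
    intro δ hδ
    obtain ⟨p, hp⟩ := exists_polynomial_near_of_continuousOn (-M) M f hf.continuousOn δ hδ
    have h1 : ‖cfc f c - aeval c p‖ ≤ δ := by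
      rw [← cfc_polynomial p c, ← cfc_sub f p.eval c hf.continuousOn (by fun_prop)]
      exact norm_cfc_le hδ.le fun t ht => by
        rw [Real.norm_eq_abs, abs_sub_comm]; exact (hp t (hMc ht)).le
    have h2 : ‖cfc f d - aeval d p‖ ≤ δ := by
      rw [← cfc_polynomial p d, ← cfc_sub f p.eval d hf.continuousOn (by fun_prop)]
      exact norm_cfc_le hδ.le fun t ht => by
        rw [Real.norm_eq_abs, abs_sub_comm]; exact (hp t (hMd ht)).le
    have heq : a * cfc f c - cfc f d * a
        = a * (cfc f c - aeval c p) - (cfc f d - aeval d p) * a := by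
      rw [mul_sub, sub_mul, hpoly p]; abel
    rw [heq]
    calc ‖a * (cfc f c - aeval c p) - (cfc f d - aeval d p) * a‖
        ≤ ‖a * (cfc f c - aeval c p)‖ + ‖(cfc f d - aeval d p) * a‖ := norm_sub_le _ _
      _ ≤ ‖a‖ * ‖cfc f c - aeval c p‖ + ‖cfc f d - aeval d p‖ * ‖a‖ :=
          add_le_add (norm_mul_le _ _) (norm_mul_le _ _)
      _ ≤ 2 * ‖a‖ * δ := by nlinarith [norm_nonneg a, norm_nonneg (cfc f c - aeval c p), norm_nonneg (cfc f d - aeval d p)]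
  have hz : ‖a * cfc f c - cfc f d * a‖ ≤ 0 := by
    refine le_of_forall_pos_le_add fun ε hε => ?_
    rcases eq_or_lt_of_le (norm_nonneg a) with ha0 | ha0
    · have := key 1 one_pos
      rw [← ha0] at this; simpa using this.trans (by linarith)
    · have := key (ε / (2 * ‖a‖ + 1)) (by positivity)
      refine this.trans ?_
      rw [zero_add]
      rw [div_eq_inv_mul, ← mul_assoc]
      have h2a : 0 < 2 * ‖a‖ + 1 := by linarith
      calc 2 * ‖a‖ * (2 * ‖a‖ + 1)⁻¹ * ε ≤ 1 * ε := by
            apply mul_le_mul_of_nonneg_right _ hε.le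
            rw [mul_inv_le_iff₀ h2a]; linarith
        _ = ε := one_mul ε
  have := le_antisymm hz (norm_nonneg _)
  rwa [norm_eq_zero, sub_eq_zero] at this

variable {A : Type*} [CStarAlgebra A]

lemma aux_part1 (E : Set A) (hclosed : IsClosed E)
    (hadd : ∀ x ∈ E, ∀ y ∈ E, x + y ∈ E)
    (hmul : ∀ x ∈ E, ∀ y ∈ E, x * y ∈ E)
    (hsmul : ∀ (c : ℂ), ∀ x ∈ E, c • x ∈ E)
    (hstar : ∀ x ∈ E, star x ∈ E)
    (hcomm : ∀ x ∈ E, ∀ y ∈ E, x * y = y * x)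
    (happrox : ∃ l : Filter A, l.NeBot ∧ (∀ᶠ e in l, e ∈ E) ∧
      ∀ a : A, Tendsto (fun e => e * a) l (𝓝 a)) :
    {a : A | ∀ e ∈ E, star a * e * a ∈ E ∧ a * e * star a ∈ E} ⊆
      closure {a : A | (fun x => a * x) '' {e ∈ E | star e = e} =
        (fun x => x * a) '' {e ∈ E | star e = e}} := by
  obtain ⟨l, hl, hlE, hlim⟩ := happrox
  haveI := hl
  have hsmulR : ∀ (r : ℝ), ∀ x ∈ E, r • x ∈ E := fun r x hx => by
    rw [← Complex.coe_smul]; exact hsmul _ x hx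
  intro a ha
  simp only [Set.mem_setOf_eq] at ha
  have hcmem : star a * a ∈ E := by
    refine hclosed.mem_of_tendsto ((hlim a).const_mul (star a)) ?_
    filter_upwards [hlE] with e he
    simpa [← mul_assoc] using (ha e he).1
  have hdmem : a * star a ∈ E := by
    refine hclosed.mem_of_tendsto ((hlim (star a)).const_mul a) ?_
    filter_upwards [hlE] with e he
    simpa [← mul_assoc] using (ha e he).2
  have hc : IsSelfAdjoint (star a * a) := IsSelfAdjoint.star_mul_self a
  have hd : IsSelfAdjoint (a * star a) := IsSelfAdjoint.mul_star_self a
  rw [Metric.mem_closure_iff]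
  intro δ hδ
  set ε := δ^2/2 with hεdef
  have hε : 0 < ε := by positivity
  set g : ℝ → ℝ := fun t => min 1 (max 0 (2*|t|/ε - 1)) with hgdef
  set q : ℝ → ℝ := fun t => t / max (t^2) ((ε/2)^2) with hqdef
  have hg_cont : Continuous g := by
    apply continuous_const.min
    apply continuous_const.max
    fun_prop
  have hdenom : ∀ t : ℝ, 0 < max (t^2) ((ε/2)^2) := fun t =>
    lt_of_lt_of_le (by positivity) (le_max_right _ _)
  have hq_cont : Continuous q := continuous_id.div (by fun_prop) fun t => (hdenom t).ne'
  have hg0 : g 0 = 0 := by norm_num [hgdef]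
  have hq0 : q 0 = 0 := by simp [hqdef]
  have hg_nonneg : ∀ t, 0 ≤ g t := fun t => le_min zero_le_one (le_max_left _ _)
  have hg_le_one : ∀ t, g t ≤ 1 := fun t => min_le_left _ _
  have hgsmall : ∀ t : ℝ, |t| ≤ ε/2 → g t = 0 := by
    intro t ht
    have h1 : 2*|t|/ε - 1 ≤ 0 := by
      rw [sub_nonpos, div_le_one hε]; linarith
    simp [hgdef, max_eq_left h1, min_eq_right]
  have hgbig : ∀ t : ℝ, ε ≤ |t| → g t = 1 := by
    intro t ht
    have h1 : (1:ℝ) ≤ 2*|t|/ε - 1 := by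
      rw [le_sub_iff_add_le, le_div_iff₀ hε]; linarith
    have h0 : max (0:ℝ) (2*|t|/ε - 1) = 2*|t|/ε - 1 := max_eq_right (by linarith)
    simp [hgdef, h0, min_eq_left h1]
  have F1 : ∀ t : ℝ, q t * t * g t = g t := by
    intro t
    rcases le_or_gt (|t|) (ε/2) with h | h
    · rw [hgsmall t h, mul_zero]
    · have ht2 : (ε/2)^2 < t^2 := by nlinarith [abs_nonneg t, sq_abs t]
      have hmax : max (t^2) ((ε/2)^2) = t^2 := max_eq_left ht2.le
      have ht0 : t ≠ 0 := by
        intro h0; rw [h0] at h; simp at h; linarith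
      have hqt : q t * t = 1 := by
        rw [hqdef]; simp only; rw [hmax]; field_simp
      rw [hqt, one_mul]
  have F2 : ∀ t : ℝ, |(1 - g t) * (t * (1 - g t))| ≤ ε := by
    intro t
    rcases le_or_gt (|t|) ε with h | h
    · have h1 : |1 - g t| ≤ 1 := abs_le.mpr ⟨by linarith [hg_le_one t], by linarith [hg_nonneg t]⟩
      rw [abs_mul, abs_mul]
      have h2 : |t| * |1 - g t| ≤ ε * 1 := mul_le_mul h h1 (abs_nonneg _) hε.le
      have h3 : |1 - g t| * (|t| * |1 - g t|) ≤ 1 * (ε * 1) :=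
        mul_le_mul h1 h2 (by positivity) zero_le_one
      linarith
    · rw [hgbig t h.le]; simpa using hε.le
  -- the cfc elements
  set c := star a * a with hcdef
  set d := a * star a with hddef
  set G := cfc g c with hGdef
  set Q := cfc q c with hQdef
  set Gd := cfc g d with hGddef
  set Qd := cfc q d with hQddef
  have hGmem : G ∈ E := aux_cfc_mem E hclosed hadd hmul hsmulR hcmem hc g hg_cont hg0
  have hQmem : Q ∈ E := aux_cfc_mem E hclosed hadd hmul hsmulR hcmem hc q hq_cont hq0
  have hGdmem : Gd ∈ E := aux_cfc_mem E hclosed hadd hmul hsmulR hdmem hd g hg_cont hg0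
  have hQdmem : Qd ∈ E := aux_cfc_mem E hclosed hadd hmul hsmulR hdmem hd q hq_cont hq0
  have hGsa : IsSelfAdjoint G := cfc_predicate g c
  have hQsa : IsSelfAdjoint Q := cfc_predicate q c
  have hGdsa : IsSelfAdjoint Gd := cfc_predicate g d
  have hQdsa : IsSelfAdjoint Qd := cfc_predicate q d
  have hb2 : a * G = Gd * a := aux_intertwine a g hg_cont
  have hQcG : Q * (c * G) = G := by
    conv_lhs => rw [← cfc_id ℝ c hc]
    rw [← cfc_mul id g c continuousOn_id hg_cont.continuousOn,
      ← cfc_mul q (fun x => id x * g x) c hq_cont.continuousOn (continuous_id.mul hg_cont).continuousOn]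
    exact cfc_congr fun t _ => by rw [show q t * (id t * g t) = q t * t * g t by simp [mul_assoc]]; exact F1 t
  have hGdQd : Gd * (d * Qd) = Gd := by
    conv_lhs => rw [← cfc_id ℝ d hd]
    rw [← cfc_mul id q d continuousOn_id hq_cont.continuousOn,
      ← cfc_mul g (fun x => id x * q x) d hg_cont.continuousOn (continuous_id.mul hq_cont).continuousOn]
    exact cfc_congr fun t _ => by rw [show g t * (id t * q t) = q t * t * g t by simp; ring]; exact F1 t
  have hswap : ∀ x ∈ E, ∀ y ∈ E, ∀ z : A, x * (y * z) = y * (x * z) := by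
    intro x hx y hy z
    rw [← mul_assoc, hcomm x hx y hy, mul_assoc]
  set b := a * G with hbdef
  have hbN : b ∈ {a : A | (fun x => a * x) '' {e ∈ E | star e = e} =
        (fun x => x * a) '' {e ∈ E | star e = e}} := by
    simp only [Set.mem_setOf_eq]
    apply Set.ext
    intro z
    constructor
    · rintro ⟨e, ⟨heE, hesa⟩, rfl⟩
      refine ⟨a * (e * Q) * star a, ⟨(ha _ (hmul e heE Q hQmem)).2, ?_⟩, ?_⟩
      · have h1 : star (a * (e * Q) * star a) = a * star (e * Q) * star a := by
          simp only [star_mul, star_star, mul_assoc]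
        rw [h1, star_mul, hesa, hQsa.star_eq, hcomm Q hQmem e heE]
      · show (a * (e * Q) * star a) * b = b * e
        have h2 : (a * (e * Q) * star a) * (a * G) = a * (e * (Q * (star a * (a * G)))) := by
          simp only [mul_assoc]
        have h3 : star a * (a * G) = c * G := by rw [hcdef, mul_assoc]
        rw [hbdef, h2, h3, hQcG, mul_assoc, hcomm e heE G hGmem, ← mul_assoc]
    · rintro ⟨f, ⟨hfE, hfsa⟩, rfl⟩
      refine ⟨star a * (f * Qd) * a, ⟨(ha _ (hmul f hfE Qd hQdmem)).1, ?_⟩, ?_⟩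
      · have h1 : star (star a * (f * Qd) * a) = star a * star (f * Qd) * a := by
          simp only [star_mul, star_star, mul_assoc]
        rw [h1, star_mul, hfsa, hQdsa.star_eq, hcomm Qd hQdmem f hfE]
      · show b * (star a * (f * Qd) * a) = f * b
        have h2 : b * (star a * (f * Qd) * a) = Gd * (a * (star a * (f * (Qd * a)))) := by
          rw [hb2]; simp only [mul_assoc]
        have h3 : a * (star a * (f * (Qd * a))) = d * (f * (Qd * a)) := by
          rw [hddef, mul_assoc]
        rw [h2, h3, hswap d hdmem f hfE, hswap Gd hGdmem f hfE]
        congr 1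
        rw [show Gd * (d * (Qd * a)) = (Gd * (d * Qd)) * a by simp only [mul_assoc],
          hGdQd, ← hb2]
  have hcfc_sub1 : cfc (fun t => 1 - g t) c = 1 - G := by
    rw [cfc_sub (fun _ => (1:ℝ)) g c (by fun_prop) hg_cont.continuousOn, cfc_const_one ℝ c]
  have hy : a - b = a * cfc (fun t => 1 - g t) c := by
    rw [hcfc_sub1, mul_sub, mul_one, hbdef]
  have hynorm : ‖a - b‖ * ‖a - b‖ ≤ ε := by
    set y := cfc (fun t => 1 - g t) c with hydef
    have hysa : IsSelfAdjoint y := cfc_predicate _ c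
    rw [hy, ← CStarRing.norm_star_mul_self]
    have h5 : star (a * y) * (a * y) = y * (c * y) := by
      rw [star_mul, hysa.star_eq, hcdef]
      simp only [mul_assoc]
    have h6 : y * (c * y) = cfc (fun t => (1 - g t) * (t * (1 - g t))) c := by
      conv_lhs => rw [← cfc_id ℝ c hc]
      rw [hydef, ← cfc_mul id (fun t => 1 - g t) c continuousOn_id (continuous_const.sub hg_cont).continuousOn,
        ← cfc_mul (fun t => 1 - g t) (fun x => id x * (1 - g x)) c (continuous_const.sub hg_cont).continuousOn
          (continuous_id.mul (continuous_const.sub hg_cont)).continuousOn]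
      exact cfc_congr fun t _ => by simp
    rw [h5, h6]
    exact norm_cfc_le hε.le fun t _ => by rw [Real.norm_eq_abs]; exact F2 t
  refine ⟨b, hbN, ?_⟩
  rw [dist_eq_norm]
  have hfin : ‖a - b‖ * ‖a - b‖ ≤ δ^2/2 := hεdef ▸ hynorm
  nlinarith [norm_nonneg (a - b), hfin, hδ]

lemma aux_part2 (E : Set A)
    (hadd : ∀ x ∈ E, ∀ y ∈ E, x + y ∈ E)
    (hmul : ∀ x ∈ E, ∀ y ∈ E, x * y ∈ E)
    (hsmul : ∀ (c : ℂ), ∀ x ∈ E, c • x ∈ E)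
    (hstar : ∀ x ∈ E, star x ∈ E)
    (hcomm : ∀ x ∈ E, ∀ y ∈ E, x * y = y * x)
    (hmax : ∀ x : A, (∀ e ∈ E, x * e = e * x) → x ∈ E) :
    {a : A | (fun x => a * x) '' {e ∈ E | star e = e} =
        (fun x => x * a) '' {e ∈ E | star e = e}} ⊆
      {a : A | ∀ e ∈ E, star a * e * a ∈ E ∧ a * e * star a ∈ E} := by
  intro a haN
  simp only [Set.mem_setOf_eq] at haN ⊢
  have hi : ∀ e, e ∈ E → star e = e → ∃ f, f ∈ E ∧ star f = f ∧ a * e = f * a := by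
    intro e heE hesa
    have hz : a * e ∈ (fun x => x * a) '' {e ∈ E | star e = e} := by
      rw [← haN]; exact ⟨e, ⟨heE, hesa⟩, rfl⟩
    obtain ⟨f, ⟨hfE, hfsa⟩, hfe⟩ := hz
    exact ⟨f, hfE, hfsa, hfe.symm⟩
  have hii : ∀ f, f ∈ E → star f = f → ∃ e, e ∈ E ∧ star e = e ∧ f * a = a * e := by
    intro f hfE hfsa
    have hz : f * a ∈ (fun x => a * x) '' {e ∈ E | star e = e} := by
      rw [haN]; exact ⟨f, ⟨hfE, hfsa⟩, rfl⟩
    obtain ⟨e, ⟨heE, hesa⟩, hfe⟩ := hz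
    exact ⟨e, heE, hesa, hfe.symm⟩
  have hdecomp : ∀ x ∈ E, ∃ u v, (u ∈ E ∧ star u = u) ∧ (v ∈ E ∧ star v = v) ∧
      x = u + Complex.I • v := by
    intro x hx
    refine ⟨(2⁻¹ : ℂ) • (x + star x), (-(Complex.I)/2 : ℂ) • (x - star x),
      ⟨hsmul _ _ (hadd x hx _ (hstar x hx)), ?_⟩, ⟨?_, ?_⟩, ?_⟩
    · rw [star_smul, star_add, star_star]
      simp [add_comm]
    · rw [show x - star x = x + (-1 : ℂ) • star x by rw [neg_smul, one_smul, ← sub_eq_add_neg]]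
      exact hsmul _ _ (hadd x hx _ (hsmul _ _ (hstar x hx)))
    · rw [star_smul, star_sub, star_star]
      rw [show star ((-(Complex.I)/2 : ℂ)) = Complex.I/2 by simp]
      rw [show (-(Complex.I)/2 : ℂ) = -(Complex.I/2) by ring, neg_smul, ← smul_neg, neg_sub]
    · have hIv : Complex.I • ((-(Complex.I)/2 : ℂ) • (x - star x))
          = (2⁻¹:ℂ) • (x - star x) := by
        rw [smul_smul]
        congr 1
        rw [show Complex.I * (-(Complex.I)/2) = -(Complex.I*Complex.I)/2 by ring,
          Complex.I_mul_I]
        norm_num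
      rw [hIv, smul_add, smul_sub]
      module
  have hdd : ∀ e, e ∈ E → star e = e → (a * star a) * e = e * (a * star a) := by
    intro e heE hesa
    obtain ⟨e', he'E, he'sa, he'⟩ := hii e heE hesa
    have hstar1 : star a * e = e' * star a := by
      have h := congrArg star he'
      rw [star_mul, star_mul, hesa, he'sa] at h
      exact h
    calc (a * star a) * e = a * (star a * e) := mul_assoc _ _ _
      _ = a * (e' * star a) := by rw [hstar1]
      _ = (a * e') * star a := (mul_assoc _ _ _).symm
      _ = (e * a) * star a := by rw [← he']
      _ = e * (a * star a) := mul_assoc _ _ _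
  have hcc : ∀ e, e ∈ E → star e = e → (star a * a) * e = e * (star a * a) := by
    intro e heE hesa
    obtain ⟨f, hfE, hfsa, hf⟩ := hi e heE hesa
    have hstar1 : e * star a = star a * f := by
      have h := congrArg star hf
      rw [star_mul, star_mul, hesa, hfsa] at h
      exact h
    calc (star a * a) * e = star a * (a * e) := mul_assoc _ _ _
      _ = star a * (f * a) := by rw [hf]
      _ = (star a * f) * a := (mul_assoc _ _ _).symm
      _ = (e * star a) * a := by rw [← hstar1]
      _ = e * (star a * a) := mul_assoc _ _ _
  have hcomm_all : ∀ (w : A), (∀ e, e ∈ E → star e = e → w * e = e * w) →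
      ∀ x ∈ E, w * x = x * w := by
    intro w hw x hx
    obtain ⟨u, v, ⟨huE, husa⟩, ⟨hvE, hvsa⟩, hxuv⟩ := hdecomp x hx
    rw [hxuv, mul_add, add_mul, hw u huE husa, mul_smul_comm, smul_mul_assoc,
      hw v hvE hvsa]
  have hdmem : a * star a ∈ E := hmax _ (hcomm_all _ hdd)
  have hcmem : star a * a ∈ E := hmax _ (hcomm_all _ hcc)
  intro x hx
  obtain ⟨u, v, ⟨huE, husa⟩, ⟨hvE, hvsa⟩, hxuv⟩ := hdecomp x hx
  have key1 : ∀ w, w ∈ E → star w = w → star a * w * a ∈ E := by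
    intro w hwE hwsa
    obtain ⟨e', he'E, he'sa, he'⟩ := hii w hwE hwsa
    have h : star a * w * a = (star a * a) * e' := by
      rw [mul_assoc, he', ← mul_assoc]
    rw [h]; exact hmul _ hcmem _ he'E
  have key2 : ∀ w, w ∈ E → star w = w → a * w * star a ∈ E := by
    intro w hwE hwsa
    obtain ⟨f, hfE, hfsa, hf⟩ := hi w hwE hwsa
    have h : a * w * star a = f * (a * star a) := by rw [hf, mul_assoc]
    rw [h]; exact hmul _ hfE _ hdmem
  constructor
  · have hexp : star a * x * a = star a * u * a + Complex.I • (star a * v * a) := by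
      rw [hxuv, mul_add, add_mul, mul_smul_comm, smul_mul_assoc]
    rw [hexp]; exact hadd _ (key1 u huE husa) _ (hsmul _ _ (key1 v hvE hvsa))
  · have hexp : a * x * star a = a * u * star a + Complex.I • (a * v * star a) := by
      rw [hxuv, mul_add, add_mul, mul_smul_comm, smul_mul_assoc]
    rw [hexp]; exact hadd _ (key2 u huE husa) _ (hsmul _ _ (key2 v hvE hvsa))

lemma aux_closedstar (E : Set A) (hclosed : IsClosed E) :
    IsClosed {a : A | ∀ e ∈ E, star a * e * a ∈ E ∧ a * e * star a ∈ E} := by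
  have h : {a : A | ∀ e ∈ E, star a * e * a ∈ E ∧ a * e * star a ∈ E} =
      ⋂ e ∈ E, ((fun a => star a * e * a) ⁻¹' E ∩ (fun a => a * e * star a) ⁻¹' E) := by
    ext a; simp [Set.mem_iInter]
  rw [h]
  exact isClosed_biInter fun e he =>
    (hclosed.preimage (by fun_prop)).inter (hclosed.preimage (by fun_prop))

end AuxCStar

/-- Theorem 2.16: if `A` is a C*-algebra and `E` a commutative C*-subalgebra
containing an approximate unit for `A` (encoded as a filter `l`, corresponding
to a net `(e_λ) ⊆ E` with `e_λ a → a` for all `a`), then the *-normalisers of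
`E` are contained in the closure of the normalisers of `E_sa`; if `E` is also
maximal commutative then they coincide. -/
theorem stmt0 {A : Type*} [NormedRing A] [StarRing A] [CStarRing A]
    [NormedAlgebra ℂ A] [StarModule ℂ A] [CompleteSpace A]
    (E : Set A) (hclosed : IsClosed E)
    (hadd : ∀ x ∈ E, ∀ y ∈ E, x + y ∈ E)
    (hmul : ∀ x ∈ E, ∀ y ∈ E, x * y ∈ E)
    (hsmul : ∀ (c : ℂ), ∀ x ∈ E, c • x ∈ E)
    (hstar : ∀ x ∈ E, star x ∈ E)
    (hcomm : ∀ x ∈ E, ∀ y ∈ E, x * y = y * x)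
    (happrox : ∃ l : Filter A, l.NeBot ∧ (∀ᶠ e in l, e ∈ E) ∧
      ∀ a : A, Tendsto (fun e => e * a) l (𝓝 a)) :
    {a : A | ∀ e ∈ E, star a * e * a ∈ E ∧ a * e * star a ∈ E} ⊆
      closure {a : A | (fun x => a * x) '' {e ∈ E | star e = e} =
        (fun x => x * a) '' {e ∈ E | star e = e}} ∧
    ((∀ x : A, (∀ e ∈ E, x * e = e * x) → x ∈ E) →
      {a : A | ∀ e ∈ E, star a * e * a ∈ E ∧ a * e * star a ∈ E} =
        closure {a : A | (fun x => a * x) '' {e ∈ E | star e = e} =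
          (fun x => x * a) '' {e ∈ E | star e = e}}) := by
  letI : CStarAlgebra A :=
    { ‹NormedRing A›, ‹StarRing A›, ‹CStarRing A›, ‹NormedAlgebra ℂ A›,
      ‹StarModule ℂ A›, ‹CompleteSpace A› with }
  have h1 := aux_part1 E hclosed hadd hmul hsmul hstar hcomm happrox
  refine ⟨h1, fun hmax => ?_⟩
  exact Set.Subset.antisymm h1
    (closure_minimal (aux_part2 E hadd hmul hsmul hstar hcomm hmax)
      (aux_closedstar E hclosed))
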